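/- Let E₀ ⊆ ℚ^{2d} be a linear subspace which is isotropic with respect to ω (that is, ω(u,v) = 0 for all u,v ∈ E₀), and let Z₀ = E₀ ∩ ℤ^{2d}. Then there exists x ∈ ℝ^{2d} such that n·x ≡ n₁·n₂ (mod 2) for every n = (n₁,n₂) ∈ Z₀; equivalently, there exists x₀ ∈ ℝ^{2d}/ℤ^{2d} such that n·x₀ ≡ (n₁·n₂)/2 (mod ℤ) for all n = (n₁,n₂) ∈ Z₀. -/
import Mathlib

open scoped BigOperators

/-- The standard symplectic form `ω(m,n) = m₁·n₂ − m₂·n₁` on `ℚ^{2d}`,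
with coordinates indexed by `Fin d ⊕ Fin d`. -/
def sympQ {d : ℕ} (m n : (Fin d ⊕ Fin d) → ℚ) : ℚ :=
  (∑ i : Fin d, m (Sum.inl i) * n (Sum.inr i)) -
    (∑ i : Fin d, m (Sum.inr i) * n (Sum.inl i))

namespace St17

variable {d : ℕ}

/-- Integer quadratic form `q(n) = ∑ n₁ᵢ n₂ᵢ`. -/
def qZ (n : (Fin d ⊕ Fin d) → ℤ) : ℤ :=
  ∑ i : Fin d, n (Sum.inl i) * n (Sum.inr i)

/-- Coordinatewise cast `ℤ → ℚ`, as a `ℤ`-linear map. -/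
def castQ (d : ℕ) : ((Fin d ⊕ Fin d) → ℤ) →ₗ[ℤ] ((Fin d ⊕ Fin d) → ℚ) where
  toFun n := fun i => (n i : ℚ)
  map_add' n m := by funext i; simp only [Pi.add_apply]; push_cast; ring
  map_smul' k n := by funext i; simp [zsmul_eq_mul]

/-- Coordinatewise cast `ℤ → ZMod 2`, as a `ℤ`-linear map. -/
def castZ2 (d : ℕ) : ((Fin d ⊕ Fin d) → ℤ) →ₗ[ℤ] ((Fin d ⊕ Fin d) → ZMod 2) where
  toFun n := fun i => (n i : ZMod 2)
  map_add' n m := by funext i; simp only [Pi.add_apply]; push_cast; ring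
  map_smul' k n := by funext i; simp [zsmul_eq_mul]

end St17

set_option maxHeartbeats 1000000 in
open St17 in
theorem statement17 (d : ℕ) (hd : 1 ≤ d)
    (E₀ : Submodule ℚ ((Fin d ⊕ Fin d) → ℚ))
    -- `E₀` is isotropic with respect to `ω`
    (hiso : ∀ u ∈ E₀, ∀ v ∈ E₀, sympQ u v = 0) :
    -- there is `x ∈ ℝ^{2d}` with `n·x ≡ n₁·n₂ (mod 2)` for all `n ∈ Z₀ = E₀ ∩ ℤ^{2d}`
    ∃ x : (Fin d ⊕ Fin d) → ℝ,
      ∀ n : (Fin d ⊕ Fin d) → ℤ, (fun i => (n i : ℚ)) ∈ E₀ →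
        ∃ m : ℤ, (∑ i : Fin d ⊕ Fin d, (n i : ℝ) * x i)
          = ((∑ i : Fin d, n (Sum.inl i) * n (Sum.inr i) : ℤ) : ℝ) + 2 * (m : ℝ) := by
  classical
  set M : Submodule ℤ ((Fin d ⊕ Fin d) → ℤ) :=
    Submodule.comap (castQ d) (E₀.restrictScalars ℤ) with hM
  -- isotropy over ℤ
  have hcross : ∀ n ∈ M, ∀ m ∈ M,
      (∑ i : Fin d, n (Sum.inl i) * m (Sum.inr i))
        = ∑ i : Fin d, n (Sum.inr i) * m (Sum.inl i) := by
    intro n hn m hm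
    have h := hiso _ hn _ hm
    have h2 : (∑ i : Fin d, (n (Sum.inl i) : ℚ) * (m (Sum.inr i) : ℚ))
        - ∑ i : Fin d, (n (Sum.inr i) : ℚ) * (m (Sum.inl i) : ℚ) = 0 := by
      simpa [sympQ, castQ] using h
    exact_mod_cast sub_eq_zero.mp h2
  -- cross-term identity
  have hq : ∀ n m : (Fin d ⊕ Fin d) → ℤ, qZ (n + m)
      = qZ n + qZ m + ((∑ i : Fin d, n (Sum.inl i) * m (Sum.inr i))
        + ∑ i : Fin d, m (Sum.inl i) * n (Sum.inr i)) := by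
    intro n m
    simp only [qZ, Pi.add_apply]
    rw [← Finset.sum_add_distrib, ← Finset.sum_add_distrib, ← Finset.sum_add_distrib]
    apply Finset.sum_congr rfl
    intro i _
    ring
  -- the quadratic form mod 2 is additive on `M`
  have Qadd : ∀ n m : M, ((qZ ((n : (Fin d ⊕ Fin d) → ℤ) + (m : (Fin d ⊕ Fin d) → ℤ)) : ℤ) : ZMod 2)
      = ((qZ (n : (Fin d ⊕ Fin d) → ℤ) : ℤ) : ZMod 2) + ((qZ (m : (Fin d ⊕ Fin d) → ℤ) : ℤ) : ZMod 2) := by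
    intro n m
    rw [hq]
    have hc := hcross _ n.2 _ m.2
    have ht : (∑ i : Fin d, (n : (Fin d ⊕ Fin d) → ℤ) (Sum.inl i) * (m : (Fin d ⊕ Fin d) → ℤ) (Sum.inr i))
        + ∑ i : Fin d, (m : (Fin d ⊕ Fin d) → ℤ) (Sum.inl i) * (n : (Fin d ⊕ Fin d) → ℤ) (Sum.inr i)
        = 2 * ∑ i : Fin d, (m : (Fin d ⊕ Fin d) → ℤ) (Sum.inl i) * (n : (Fin d ⊕ Fin d) → ℤ) (Sum.inr i) := by
      rw [hc]
      rw [show (∑ i : Fin d, (n : (Fin d ⊕ Fin d) → ℤ) (Sum.inr i) * (m : (Fin d ⊕ Fin d) → ℤ) (Sum.inl i))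
          = ∑ i : Fin d, (m : (Fin d ⊕ Fin d) → ℤ) (Sum.inl i) * (n : (Fin d ⊕ Fin d) → ℤ) (Sum.inr i) from
        Finset.sum_congr rfl fun i _ => mul_comm _ _]
      ring
    rw [ht]
    push_cast
    rw [show (2 : ZMod 2) = 0 from rfl]
    ring
  set Q : M →ₗ[ℤ] ZMod 2 :=
    { toFun := fun n => ((qZ (n : (Fin d ⊕ Fin d) → ℤ) : ℤ) : ZMod 2)
      map_add' := fun n m => Qadd n m
      map_smul' := by
        intro k n
        have h1 : qZ (k • (n : (Fin d ⊕ Fin d) → ℤ)) = k ^ 2 * qZ (n : (Fin d ⊕ Fin d) → ℤ) := by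
          simp only [qZ, Pi.smul_apply, smul_eq_mul, Finset.mul_sum]
          apply Finset.sum_congr rfl; intro i _; ring
        have h2 : ((k : ZMod 2)) ^ 2 = (k : ZMod 2) := by
          have h : ∀ c : ZMod 2, c ^ 2 = c := by decide
          exact h _
        simp only [Submodule.coe_smul, RingHom.id_apply]
        rw [h1]
        simp only [zsmul_eq_mul]
        push_cast
        rw [h2] } with hQ
  set pM : M →ₗ[ℤ] ((Fin d ⊕ Fin d) → ZMod 2) := (castZ2 d).comp M.subtype with hpM
  have hker : LinearMap.ker pM ≤ LinearMap.ker Q := by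
    intro n hn
    simp only [LinearMap.mem_ker] at hn ⊢
    have hdvd : ∀ i, (2 : ℤ) ∣ (n : (Fin d ⊕ Fin d) → ℤ) i := by
      intro i
      have h0 : (((n : (Fin d ⊕ Fin d) → ℤ) i : ZMod 2)) = 0 := congrFun hn i
      exact (ZMod.intCast_zmod_eq_zero_iff_dvd _ 2).mp h0
    have h0 : (2 : ℤ) ∣ qZ (n : (Fin d ⊕ Fin d) → ℤ) := by
      apply Finset.dvd_sum
      intro i _
      exact Dvd.dvd.mul_right (hdvd (Sum.inl i)) _
    simp only [hQ, LinearMap.coe_mk, AddHom.coe_mk]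
    exact (ZMod.intCast_zmod_eq_zero_iff_dvd _ 2).mpr h0
  -- functional on the range of pM
  set φ₁ : LinearMap.range pM →ₗ[ℤ] ZMod 2 :=
    ((LinearMap.ker pM).liftQ Q hker).comp (pM.quotKerEquivRange).symm.toLinearMap with hφ₁
  have hφ₁app : ∀ (n : M), φ₁ ⟨pM n, LinearMap.mem_range_self _ n⟩ = Q n := by
    intro n
    simp only [hφ₁, LinearMap.comp_apply, LinearEquiv.coe_toLinearMap]
    rw [pM.quotKerEquivRange_symm_apply_image]
    simp [Submodule.liftQ_apply]
  -- view the range as `ZMod 2`-subspace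
  have hzmod2 : ∀ c : ZMod 2, c = 0 ∨ c = 1 := by decide
  set V : Submodule (ZMod 2) ((Fin d ⊕ Fin d) → ZMod 2) :=
    { carrier := LinearMap.range pM
      add_mem' := fun ha hb => add_mem ha hb
      zero_mem' := zero_mem _
      smul_mem' := by
        intro c x hx
        rcases hzmod2 c with rfl | rfl
        · simpa using zero_mem (LinearMap.range pM)
        · simpa using hx } with hV
  set φ : V →ₗ[ZMod 2] ZMod 2 :=
    { toFun := fun x => φ₁ ⟨x.1, x.2⟩
      map_add' := fun a b => map_add φ₁ ⟨a.1, a.2⟩ ⟨b.1, b.2⟩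
      map_smul' := by
        intro c x
        rcases hzmod2 c with rfl | rfl
        · show φ₁ ⟨((0 : ZMod 2) • x).1, ((0 : ZMod 2) • x).2⟩ = _
          have h0 : (⟨((0 : ZMod 2) • x).1, ((0 : ZMod 2) • x).2⟩ : LinearMap.range pM) = 0 :=
            Subtype.ext (by simp)
          rw [h0, map_zero]; simp
        · show φ₁ ⟨((1 : ZMod 2) • x).1, ((1 : ZMod 2) • x).2⟩ = _
          simp } with hφ
  obtain ⟨g, hg⟩ := φ.exists_extend
  set c : (Fin d ⊕ Fin d) → ZMod 2 := fun i => g (Pi.single i 1) with hc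
  have hgsum : ∀ y : (Fin d ⊕ Fin d) → ZMod 2, g y = ∑ i : Fin d ⊕ Fin d, y i * c i := by
    intro y
    have hy : y = ∑ i : Fin d ⊕ Fin d, (y i) • Pi.single i (1 : ZMod 2) := by
      funext j
      simp [Pi.single_apply, Finset.sum_ite_eq']
    conv_lhs => rw [hy]
    rw [map_sum]
    apply Finset.sum_congr rfl
    intro i _
    rw [map_smul, smul_eq_mul, hc]
  -- the real vector
  refine ⟨fun i => (((c i).val : ℤ) : ℝ), ?_⟩
  intro n hn
  have hnM : n ∈ M := by
    simpa [hM, castQ, Submodule.mem_comap] using hn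
  -- key mod-2 identity
  have hkey : ((∑ i : Fin d ⊕ Fin d, n i * ((c i).val : ℤ) : ℤ) : ZMod 2)
      = ((qZ n : ℤ) : ZMod 2) := by
    have hmem : pM (⟨n, hnM⟩ : M) ∈ LinearMap.range pM :=
      LinearMap.mem_range_self pM (⟨n, hnM⟩ : M)
    have h2 : g (pM (⟨n, hnM⟩ : M)) = φ ⟨pM (⟨n, hnM⟩ : M), hmem⟩ := by
      have := congrArg (fun f => f (⟨pM (⟨n, hnM⟩ : M), hmem⟩ : V)) hg
      simpa using this
    have h3 : φ ⟨pM (⟨n, hnM⟩ : M), hmem⟩ = Q (⟨n, hnM⟩ : M) :=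
      hφ₁app ⟨n, hnM⟩
    have h4 := hgsum (pM (⟨n, hnM⟩ : M))
    rw [h2, h3] at h4
    push_cast
    have h5 : ∀ i, (((c i).val : ℤ) : ZMod 2) = c i := by
      intro i
      push_cast
      simp [ZMod.natCast_val, ZMod.cast_id]
    calc (∑ i : Fin d ⊕ Fin d, ((n i : ZMod 2)) * (((c i).val : ℤ) : ZMod 2))
        = ∑ i : Fin d ⊕ Fin d, ((n i : ZMod 2)) * c i := by
          apply Finset.sum_congr rfl; intro i _; rw [h5]
      _ = ((qZ n : ℤ) : ZMod 2) := h4.symm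
  have hdvd : (2 : ℤ) ∣ ((∑ i : Fin d ⊕ Fin d, n i * ((c i).val : ℤ)) - qZ n) := by
    have h0 : (((∑ i : Fin d ⊕ Fin d, n i * ((c i).val : ℤ)) - qZ n : ℤ) : ZMod 2) = 0 := by
      push_cast
      rw [sub_eq_zero]
      exact_mod_cast hkey
    exact_mod_cast (ZMod.intCast_zmod_eq_zero_iff_dvd _ 2).mp h0
  obtain ⟨m, hm⟩ := hdvd
  refine ⟨m, ?_⟩
  have hint : (∑ i : Fin d ⊕ Fin d, n i * ((c i).val : ℤ)) = qZ n + 2 * m := by linarith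
  have hR := congrArg (fun z : ℤ => (z : ℝ)) hint
  push_cast at hR
  convert hR using 2 <;> simp [qZ]
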